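/- Theorem 1 (LS MSE under pilot contamination): Let L, K be positive integers, let R_t be an L×L Hermitian positive definite complex matrix with eigenvalues δ_1,…,δ_L, let A be a K×L complex matrix with AᴴA = K·E_x·I_L for some E_x > 0, let σ_w² > 0, and let σ_𝓘² ≥ 0. Then trace((Aᴴ(σ_w²·I_K + σ_𝓘²·A·R_t·Aᴴ)⁻¹A)⁻¹) = L/(ρK) + σ_𝓘²·Σ_{i=1}^{L} δ_i, where ρ = E_x/σ_w². (Summing over R identical antennas, the total LS MSE under AWGN and pilot contamination is MSE^{(LS)} = RL/(ρK) + R·σ_𝓘²·trace(R_t); the contamination term cannot be reduced by adding pilots and persists as ρ → ∞.) -/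

import Mathlib

open Matrix
open scoped ComplexOrder

lemma aux_posSemidef_real_smul {n : Type*} [Fintype n] {M : Matrix n n ℂ}
    (h : M.PosSemidef) {r : ℝ} (hr : 0 ≤ r) : ((r : ℂ) • M).PosSemidef := by
  refine Matrix.PosSemidef.of_dotProduct_mulVec_nonneg ?_ (fun x => ?_)
  · unfold Matrix.IsHermitian
    rw [Matrix.conjTranspose_smul, h.1.eq, Complex.star_def, Complex.conj_ofReal]
  · rw [Matrix.smul_mulVec, dotProduct_smul, smul_eq_mul]
    exact mul_nonneg (by exact_mod_cast hr) (h.dotProduct_mulVec_nonneg x)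

lemma aux_posDef_real_smul_one {n : Type*} [Fintype n] [DecidableEq n]
    {r : ℝ} (hr : 0 < r) : ((r : ℂ) • (1 : Matrix n n ℂ)).PosDef := by
  refine Matrix.PosDef.of_dotProduct_mulVec_pos ?_ (fun x hx => ?_)
  · unfold Matrix.IsHermitian
    rw [Matrix.conjTranspose_smul, Matrix.conjTranspose_one,
      Complex.star_def, Complex.conj_ofReal]
  · rw [Matrix.smul_mulVec, dotProduct_smul, smul_eq_mul,
      Matrix.one_mulVec]
    have h1 : (0 : ℂ) < r := by exact_mod_cast hr
    have h2 : (0 : ℂ) < star x ⬝ᵥ x := by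
      simpa using (Matrix.PosDef.one (n := n) (R := ℂ)).dotProduct_mulVec_pos hx
    exact mul_pos h1 h2

/-- Theorem 1 of the paper (LS MSE under pilot contamination): with `AᴴA = K·E_x·I_L`,
noise power `σ_w²`, per-subcarrier interference power `σ_𝓘²`, tap correlation `R_t`
with eigenvalues `δ_i`, and `ρ = E_x/σ_w²`,
`trace((Aᴴ(σ_w²I_K + σ_𝓘²·A R_t Aᴴ)⁻¹A)⁻¹) = L/(ρK) + σ_𝓘²·Σ_i δ_i`. -/
theorem ls_mse_pilot_contamination {L K : ℕ} (hL : 0 < L) (hK : 0 < K)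
    (Rt : Matrix (Fin L) (Fin L) ℂ) (hRt : Rt.PosDef)
    (δ : Fin L → ℝ) (hδ : hRt.isHermitian.eigenvalues = δ)
    (A : Matrix (Fin K) (Fin L) ℂ) (Ex : ℝ) (hEx : 0 < Ex)
    (hA : Aᴴ * A = (((K : ℝ) * Ex : ℝ) : ℂ) • (1 : Matrix (Fin L) (Fin L) ℂ))
    (σw2 : ℝ) (hσw : 0 < σw2) (σI2 : ℝ) (hσI : 0 ≤ σI2)
    (ρ : ℝ) (hρ : ρ = Ex / σw2) :
    Matrix.trace (Aᴴ *
        ((σw2 : ℂ) • (1 : Matrix (Fin K) (Fin K) ℂ) + (σI2 : ℂ) • (A * Rt * Aᴴ))⁻¹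
        * A)⁻¹
      = (((L : ℝ) / (ρ * K) + σI2 * ∑ i, δ i : ℝ) : ℂ) := by
  have hc : (0:ℝ) < (K:ℝ) * Ex := by positivity
  set c : ℝ := (K:ℝ) * Ex with hcdef
  set M : Matrix (Fin K) (Fin K) ℂ :=
    (σw2 : ℂ) • (1 : Matrix (Fin K) (Fin K) ℂ) + (σI2 : ℂ) • (A * Rt * Aᴴ) with hM
  set N : Matrix (Fin L) (Fin L) ℂ :=
    (σw2 : ℂ) • (1 : Matrix (Fin L) (Fin L) ℂ) + ((σI2 * c : ℝ) : ℂ) • Rt with hN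
  -- M, N are positive definite
  have hMpd : M.PosDef := by
    refine (aux_posDef_real_smul_one hσw).add_posSemidef ?_
    exact aux_posSemidef_real_smul
      (by simpa [Matrix.mul_assoc] using hRt.posSemidef.mul_mul_conjTranspose_same A) hσI
  have hNpd : N.PosDef := by
    exact (aux_posDef_real_smul_one hσw).add_posSemidef
      (aux_posSemidef_real_smul hRt.posSemidef (mul_nonneg hσI hc.le))
  have hMdet : IsUnit M.det := (Matrix.isUnit_iff_isUnit_det M).1 hMpd.isUnit
  have hNdet : IsUnit N.det := (Matrix.isUnit_iff_isUnit_det N).1 hNpd.isUnit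
  -- key intertwining: M * A = A * N
  have hkey : M * A = A * N := by
    rw [hM, hN, Matrix.add_mul, Matrix.mul_add]
    congr 1
    · rw [Matrix.smul_mul, Matrix.mul_smul, Matrix.one_mul, Matrix.mul_one]
    · rw [Matrix.smul_mul, Matrix.mul_assoc (A * Rt) Aᴴ A, hA, Matrix.mul_smul,
        Matrix.mul_one, Matrix.mul_smul, smul_smul]
      norm_cast
  have hAN : A * N * N⁻¹ = A := by
    rw [Matrix.mul_assoc, Matrix.mul_nonsing_inv _ hNdet, Matrix.mul_one]
  have hswap : M⁻¹ * A = A * N⁻¹ :=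
    calc M⁻¹ * A = M⁻¹ * (A * N * N⁻¹) := by rw [hAN]
      _ = M⁻¹ * (M * A * N⁻¹) := by rw [hkey]
      _ = (M⁻¹ * M) * A * N⁻¹ := by rw [← Matrix.mul_assoc, ← Matrix.mul_assoc]
      _ = A * N⁻¹ := by rw [Matrix.nonsing_inv_mul _ hMdet, Matrix.one_mul]
  have hmain : Aᴴ * M⁻¹ * A = ((c : ℝ) : ℂ) • N⁻¹ := by
    rw [Matrix.mul_assoc, hswap, ← Matrix.mul_assoc, hA, Matrix.smul_mul,
      Matrix.one_mul]
  have hcne : ((c : ℝ) : ℂ) ≠ 0 := by exact_mod_cast hc.ne'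
  have hinv : (Aᴴ * M⁻¹ * A)⁻¹ = (((c : ℝ) : ℂ)⁻¹) • N := by
    rw [hmain]
    letI : Invertible ((c : ℝ) : ℂ) := invertibleOfNonzero hcne
    rw [Matrix.inv_smul (A := N⁻¹) _ (N.isUnit_nonsing_inv_det hNdet),
      Matrix.nonsing_inv_nonsing_inv _ hNdet, invOf_eq_inv _]
  -- trace of Rt equals sum of eigenvalues
  have htr : Matrix.trace Rt = ((∑ i, δ i : ℝ) : ℂ) := by
    have hspec := hRt.isHermitian.spectral_theorem
    have hU : (star (hRt.isHermitian.eigenvectorUnitary : Matrix (Fin L) (Fin L) ℂ)) *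
        (hRt.isHermitian.eigenvectorUnitary : Matrix (Fin L) (Fin L) ℂ) = 1 := by
      simpa using congrArg (Subtype.val) (unitary.star_mul_self
        hRt.isHermitian.eigenvectorUnitary)
    calc Matrix.trace Rt
        = Matrix.trace ((hRt.isHermitian.eigenvectorUnitary : Matrix (Fin L) (Fin L) ℂ) *
            Matrix.diagonal (RCLike.ofReal ∘ hRt.isHermitian.eigenvalues) *
            (star (hRt.isHermitian.eigenvectorUnitary : Matrix (Fin L) (Fin L) ℂ))) := by
          rw [Unitary.conjStarAlgAut_apply] at hspec
          rw [← hspec]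
      _ = Matrix.trace (Matrix.diagonal (RCLike.ofReal ∘ hRt.isHermitian.eigenvalues)) := by
          rw [Matrix.trace_mul_cycle, hU, Matrix.one_mul]
      _ = ((∑ i, δ i : ℝ) : ℂ) := by
          rw [Matrix.trace_diagonal, hδ]
          push_cast
          rfl
  rw [hinv, hN, smul_add, Matrix.trace_add]
  simp only [Matrix.trace_smul, Matrix.trace_one, htr, smul_eq_mul,
    Fintype.card_fin]
  have hσwne : (σw2 : ℝ) ≠ 0 := hσw.ne'
  have hKne : (K : ℝ) ≠ 0 := by exact_mod_cast hK.ne'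
  have hExne : Ex ≠ 0 := hEx.ne'
  have hcne' : c ≠ 0 := hc.ne'
  rw [hρ, hcdef] at *
  push_cast
  field_simp
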